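/- Let Γ be a δ-near potential game (δ ≥ 0) with N players whose closest exact potential game has potential φ, and let Φ denote the mixed extension of φ. Suppose the players run decentralized fictitious play over a time-varying network satisfying the connectivity and weight assumptions, with initial estimates equal to the initial empirical frequencies. Then for every ε ≥ 0 there exist a constant C > 0 and a time T such that for all t ≥ T: if the joint empirical frequency f_t is not an (ε)-Nash equilibrium of Γ (f_t ∉ Σ_ε), then Φ(f_{t+1}) − Φ(f_t) ≥ (ε − N·δ)/(t+1) − C · log t / t². -/

import Mathlib

open scoped BigOperators

noncomputable section

/-- Mixed extension of a function on pure action profiles: players `Fin N`,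
common action set `Fin K`, mixed profile `σ : Fin N → Fin K → ℝ`. -/
def mixedExt {N K : ℕ} (v : (Fin N → Fin K) → ℝ) (σ : Fin N → Fin K → ℝ) : ℝ :=
  ∑ a : Fin N → Fin K, v a * ∏ i, σ i (a i)

/-- `σ` is an `ε`-Nash equilibrium of the game with utilities `u`
(in particular each `σ i` lies in the standard simplex). -/
def IsEpsNash {N K : ℕ} (u : Fin N → (Fin N → Fin K) → ℝ) (ε : ℝ)
    (σ : Fin N → Fin K → ℝ) : Prop :=
  (∀ i, σ i ∈ stdSimplex ℝ (Fin K)) ∧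
    ∀ i : Fin N, ∀ τ ∈ stdSimplex ℝ (Fin K),
      mixedExt (u i) σ ≥ mixedExt (u i) (Function.update σ i τ) - ε

/-- Euclidean norm of the concatenation of `x` in `ℝ^{NK}`. -/
def eNorm {N K : ℕ} (x : Fin N → Fin K → ℝ) : ℝ :=
  Real.sqrt (∑ i, ∑ k, (x i k) ^ 2)

/-- `φ` is an exact potential for the game `u`. -/
def IsPotential {N K : ℕ} (u : Fin N → (Fin N → Fin K) → ℝ)
    (φ : (Fin N → Fin K) → ℝ) : Prop :=
  ∀ (i : Fin N) (a : Fin N → Fin K) (a' : Fin K),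
    φ (Function.update a i a') - φ a = u i (Function.update a i a') - u i a

/-- The maximum pairwise difference between the games `u` and `v` is at most `δ`. -/
def PairwiseDiffLe {N K : ℕ} (u v : Fin N → (Fin N → Fin K) → ℝ) (δ : ℝ) : Prop :=
  ∀ (i : Fin N) (a : Fin N → Fin K) (a' : Fin K),
    |(u i (Function.update a i a') - u i a) - (v i (Function.update a i a') - v i a)| ≤ δ

/-- The mixed strategy placing probability 1 on the pure action `k`. -/
def purePt {K : ℕ} (k : Fin K) : Fin K → ℝ := fun k' => if k' = k then 1 else 0

lemma purePt_nonneg {K : ℕ} (k k' : Fin K) : 0 ≤ purePt k k' := by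
  unfold purePt; split <;> norm_num

lemma purePt_le_one {K : ℕ} (k k' : Fin K) : purePt k k' ≤ 1 := by
  unfold purePt; split <;> norm_num

lemma purePt_sum {K : ℕ} (k : Fin K) : ∑ k', purePt k k' = 1 := by
  unfold purePt
  simp

lemma prod_update_eval {N K : ℕ} (σ : Fin N → Fin K → ℝ) (i : Fin N) (p : Fin K → ℝ)
    (a : Fin N → Fin K) :
    ∏ j, (Function.update σ i p) j (a j)
      = p (a i) * ∏ j ∈ Finset.univ.erase i, σ j (a j) := by
  rw [← Finset.mul_prod_erase Finset.univ _ (Finset.mem_univ i)]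
  congr 1
  · simp
  · exact Finset.prod_congr rfl fun j hj => by
      rw [Function.update_of_ne (Finset.ne_of_mem_erase hj)]

lemma mixedExt_update_eq_sum {N K : ℕ} (v : (Fin N → Fin K) → ℝ)
    (σ : Fin N → Fin K → ℝ) (i : Fin N) (τ : Fin K → ℝ) :
    mixedExt v (Function.update σ i τ)
      = ∑ k, τ k * mixedExt v (Function.update σ i (purePt k)) := by
  unfold mixedExt
  simp only [prod_update_eval]
  rw [show (∑ k, τ k * ∑ a : Fin N → Fin K,
        v a * (purePt k (a i) * ∏ j ∈ Finset.univ.erase i, σ j (a j)))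
      = ∑ a : Fin N → Fin K, ∑ k, τ k *
        (v a * (purePt k (a i) * ∏ j ∈ Finset.univ.erase i, σ j (a j))) by
    rw [Finset.sum_comm]
    exact Finset.sum_congr rfl fun k _ => Finset.mul_sum _ _ _]
  refine Finset.sum_congr rfl fun a _ => ?_
  simp only [purePt, mul_ite, ite_mul, mul_one, mul_zero, zero_mul, one_mul]
  rw [Finset.sum_ite_eq Finset.univ (a i)]
  simp [mul_comm, mul_left_comm]

lemma mixedExt_self_eq_sum {N K : ℕ} (v : (Fin N → Fin K) → ℝ)
    (σ : Fin N → Fin K → ℝ) (i : Fin N) :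
    mixedExt v σ = ∑ k, σ i k * mixedExt v (Function.update σ i (purePt k)) := by
  conv_lhs => rw [← Function.update_eq_self i σ]
  rw [mixedExt_update_eq_sum]

/-- reindexing: sums of coordinate-`i`-invariant functions against the indicator
of `a i = k` do not depend on `k`. -/
lemma sum_reindex_update {N K : ℕ} (F : (Fin N → Fin K) → ℝ) (i : Fin N) (k k' : Fin K)
    (hF : ∀ a x, F (Function.update a i x) = F a) :
    ∑ a : Fin N → Fin K, (if a i = k then (1:ℝ) else 0) * F a
      = ∑ a : Fin N → Fin K, (if a i = k' then (1:ℝ) else 0) * F a := by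
  have hswap : ∀ x : Fin K, Equiv.swap k k' x = k' ↔ x = k := by
    intro x
    constructor
    · intro h
      have h2 := congrArg (Equiv.swap k k') h
      rwa [Equiv.swap_apply_self, Equiv.swap_apply_right] at h2
    · intro h; rw [h]; exact Equiv.swap_apply_left k k'
  have hinv : Function.Involutive
      (fun a : Fin N → Fin K => Function.update a i (Equiv.swap k k' (a i))) := by
    intro a
    funext j
    by_cases hj : j = i
    · subst hj; simp
    · simp [Function.update_of_ne hj]
  refine Fintype.sum_bijective _ hinv.bijective _ _ fun a => ?_
  simp only [Function.update_self, hF]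
  simp only [hswap]

lemma mixedExt_update_pure {N K : ℕ} (v : (Fin N → Fin K) → ℝ)
    (σ : Fin N → Fin K → ℝ) (i : Fin N) (k k₀ : Fin K) :
    mixedExt v (Function.update σ i (purePt k))
      = ∑ a : Fin N → Fin K, (if a i = k₀ then (1:ℝ) else 0) *
          (v (Function.update a i k) * ∏ j ∈ Finset.univ.erase i, σ j (a j)) := by
  have step1 : mixedExt v (Function.update σ i (purePt k))
      = ∑ a : Fin N → Fin K, (if a i = k then (1:ℝ) else 0) *
          (v (Function.update a i k) * ∏ j ∈ Finset.univ.erase i, σ j (a j)) := by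
    unfold mixedExt
    simp only [prod_update_eval]
    refine Finset.sum_congr rfl fun a _ => ?_
    by_cases h : a i = k
    · have : Function.update a i k = a := by rw [← h]; exact Function.update_eq_self i a
      rw [this]
      simp [purePt, h, mul_comm, mul_left_comm]
    · simp [purePt, h]
  rw [step1]
  refine sum_reindex_update _ i k k₀ fun a x => ?_
  have h1 : Function.update (Function.update a i x) i k = Function.update a i k :=
    Function.update_idem ..
  rw [h1]
  congr 1
  exact Finset.prod_congr rfl fun j hj => by
    rw [Function.update_of_ne (Finset.ne_of_mem_erase hj)]

lemma mixedExt_pure_sub {N K : ℕ} (v : (Fin N → Fin K) → ℝ)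
    (σ : Fin N → Fin K → ℝ) (i : Fin N) (k k' : Fin K) :
    mixedExt v (Function.update σ i (purePt k))
      - mixedExt v (Function.update σ i (purePt k'))
      = ∑ a : Fin N → Fin K, (if a i = k' then (1:ℝ) else 0) *
          ((v (Function.update a i k) - v (Function.update a i k'))
            * ∏ j ∈ Finset.univ.erase i, σ j (a j)) := by
  rw [mixedExt_update_pure v σ i k k', mixedExt_update_pure v σ i k' k',
    ← Finset.sum_sub_distrib]
  exact Finset.sum_congr rfl fun a _ => by ring

lemma mixedExt_sub {N K : ℕ} (v v' : (Fin N → Fin K) → ℝ) (σ : Fin N → Fin K → ℝ) :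
    mixedExt (fun a => v a - v' a) σ = mixedExt v σ - mixedExt v' σ := by
  unfold mixedExt
  rw [← Finset.sum_sub_distrib]
  exact Finset.sum_congr rfl fun a _ => by ring

lemma sum_prod_eq {N K : ℕ} (g : Fin N → Fin K → ℝ) :
    ∑ a : Fin N → Fin K, ∏ j, g j (a j) = ∏ j, ∑ k, g j k := by
  rw [Finset.prod_univ_sum]
  rw [← Fintype.piFinset_univ]

/-- total mass of the indicator against the off-`i` product. -/
lemma sum_ind_prod {N K : ℕ} (σ : Fin N → Fin K → ℝ) (i : Fin N) (k' : Fin K)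
    (hs : ∀ j, ∑ k, σ j k = 1) :
    ∑ a : Fin N → Fin K, (if a i = k' then (1:ℝ) else 0) *
        ∏ j ∈ Finset.univ.erase i, σ j (a j) = 1 := by
  have h1 : ∀ a : Fin N → Fin K,
      (if a i = k' then (1:ℝ) else 0) * ∏ j ∈ Finset.univ.erase i, σ j (a j)
        = ∏ j, (Function.update σ i (purePt k')) j (a j) := by
    intro a
    rw [prod_update_eval]
    congr 1
  calc ∑ a : Fin N → Fin K, (if a i = k' then (1:ℝ) else 0) *
          ∏ j ∈ Finset.univ.erase i, σ j (a j)
      = ∑ a : Fin N → Fin K, ∏ j, (Function.update σ i (purePt k')) j (a j) :=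
        Finset.sum_congr rfl fun a _ => h1 a
    _ = ∏ j, ∑ k, (Function.update σ i (purePt k')) j k := sum_prod_eq _
    _ = 1 := by
        refine Finset.prod_eq_one fun j _ => ?_
        by_cases hj : j = i
        · subst hj; simp [purePt_sum]
        · rw [Function.update_of_ne hj]; exact hs j

/-- product difference bound. -/
lemma abs_prod_sub_prod_le {N : ℕ} (g h : Fin N → ℝ)
    (hg : ∀ j, 0 ≤ g j ∧ g j ≤ 1) (hh : ∀ j, 0 ≤ h j ∧ h j ≤ 1) :
    |∏ j, g j - ∏ j, h j| ≤ ∑ j, |g j - h j| := by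
  classical
  have key : ∀ s : Finset (Fin N),
      |∏ j ∈ s, g j - ∏ j ∈ s, h j| ≤ ∑ j ∈ s, |g j - h j| := by
    intro s
    induction s using Finset.induction_on with
    | empty => simp
    | @insert x s' hx ih =>
      rw [Finset.prod_insert hx, Finset.prod_insert hx, Finset.sum_insert hx]
      have hgb : ∀ (u : Fin N → ℝ), (∀ j, 0 ≤ u j ∧ u j ≤ 1) →
          0 ≤ ∏ j ∈ s', u j ∧ ∏ j ∈ s', u j ≤ 1 := by
        intro u hu
        exact ⟨Finset.prod_nonneg fun j _ => (hu j).1,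
          Finset.prod_le_one (fun j _ => (hu j).1) (fun j _ => (hu j).2)⟩
      have e1 : g x * ∏ j ∈ s', g j - h x * ∏ j ∈ s', h j
          = g x * (∏ j ∈ s', g j - ∏ j ∈ s', h j) + (g x - h x) * ∏ j ∈ s', h j := by
        ring
      rw [e1]
      calc |g x * (∏ j ∈ s', g j - ∏ j ∈ s', h j) + (g x - h x) * ∏ j ∈ s', h j|
          ≤ |g x * (∏ j ∈ s', g j - ∏ j ∈ s', h j)| + |(g x - h x) * ∏ j ∈ s', h j| :=
            abs_add_le _ _
        _ ≤ |g x - h x| + ∑ j ∈ s', |g j - h j| := by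
            rw [abs_mul, abs_mul]
            have b1 : |g x| ≤ 1 := abs_le.2 ⟨by linarith [(hg x).1], (hg x).2⟩
            have b2 : |∏ j ∈ s', h j| ≤ 1 := abs_le.2
              ⟨by linarith [(hgb h hh).1], (hgb h hh).2⟩
            have c1 : |g x| * |∏ j ∈ s', g j - ∏ j ∈ s', h j| ≤ ∑ j ∈ s', |g j - h j| := by
              calc |g x| * |∏ j ∈ s', g j - ∏ j ∈ s', h j|
                  ≤ 1 * |∏ j ∈ s', g j - ∏ j ∈ s', h j| := by
                    apply mul_le_mul_of_nonneg_right b1 (abs_nonneg _)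
                _ = |∏ j ∈ s', g j - ∏ j ∈ s', h j| := one_mul _
                _ ≤ ∑ j ∈ s', |g j - h j| := ih
            have c2 : |g x - h x| * |∏ j ∈ s', h j| ≤ |g x - h x| := by
              calc |g x - h x| * |∏ j ∈ s', h j| ≤ |g x - h x| * 1 :=
                    mul_le_mul_of_nonneg_left b2 (abs_nonneg _)
                _ = |g x - h x| := mul_one _
            linarith
  simpa using key Finset.univ

lemma mixedExt_lipschitz {N K : ℕ} (v : (Fin N → Fin K) → ℝ)
    (σ σ' : Fin N → Fin K → ℝ) (e : ℝ)
    (hσ : ∀ j k, 0 ≤ σ j k ∧ σ j k ≤ 1) (hσ' : ∀ j k, 0 ≤ σ' j k ∧ σ' j k ≤ 1)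
    (he : 0 ≤ e) (hclose : ∀ j k, |σ j k - σ' j k| ≤ e) :
    |mixedExt v σ - mixedExt v σ'| ≤ (∑ a, |v a|) * (N * e) := by
  unfold mixedExt
  rw [← Finset.sum_sub_distrib]
  calc |∑ a : Fin N → Fin K, (v a * ∏ j, σ j (a j) - v a * ∏ j, σ' j (a j))|
      ≤ ∑ a : Fin N → Fin K, |v a * ∏ j, σ j (a j) - v a * ∏ j, σ' j (a j)| :=
        Finset.abs_sum_le_sum_abs _ _
    _ ≤ ∑ a : Fin N → Fin K, |v a| * (N * e) := by
        refine Finset.sum_le_sum fun a _ => ?_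
        rw [← mul_sub, abs_mul]
        refine mul_le_mul_of_nonneg_left ?_ (abs_nonneg _)
        calc |∏ j, σ j (a j) - ∏ j, σ' j (a j)|
            ≤ ∑ j, |σ j (a j) - σ' j (a j)| :=
              abs_prod_sub_prod_le _ _ (fun j => hσ j (a j)) (fun j => hσ' j (a j))
          _ ≤ ∑ _j : Fin N, e := Finset.sum_le_sum fun j _ => hclose j (a j)
          _ = N * e := by simp [mul_comm]
    _ = (∑ a, |v a|) * (N * e) := by rw [Finset.sum_mul]

lemma mixedExt_update_affine {N K : ℕ} (v : (Fin N → Fin K) → ℝ)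
    (σ : Fin N → Fin K → ℝ) (i : Fin N) (y z : Fin K → ℝ) (c : ℝ) :
    mixedExt v (Function.update σ i (fun k => (1 - c) * y k + c * z k))
      = (1 - c) * mixedExt v (Function.update σ i y)
        + c * mixedExt v (Function.update σ i z) := by
  rw [mixedExt_update_eq_sum, mixedExt_update_eq_sum v σ i y, mixedExt_update_eq_sum v σ i z,
    Finset.mul_sum, Finset.mul_sum, ← Finset.sum_add_distrib]
  exact Finset.sum_congr rfl fun k _ => by ring

/-- key one-player lemma: potential difference dominates utility difference minus δ. -/
lemma pot_vs_util {N K : ℕ} {u uhat : Fin N → (Fin N → Fin K) → ℝ}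
    {φ : (Fin N → Fin K) → ℝ} {δ : ℝ}
    (hpot : ∀ (i : Fin N) (a : Fin N → Fin K) (a' : Fin K),
      φ (Function.update a i a') - φ a = uhat i (Function.update a i a') - uhat i a)
    (hnear : ∀ (i : Fin N) (a : Fin N → Fin K) (a' : Fin K),
      |(u i (Function.update a i a') - u i a)
        - (uhat i (Function.update a i a') - uhat i a)| ≤ δ)
    (σ : Fin N → Fin K → ℝ) (hσ : ∀ j, σ j ∈ stdSimplex ℝ (Fin K))
    (i : Fin N) (b : Fin K) :
    mixedExt φ (Function.update σ i (purePt b)) - mixedExt φ σ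
      ≥ mixedExt (u i) (Function.update σ i (purePt b)) - mixedExt (u i) σ - δ := by
  have hsum : ∀ j, ∑ k, σ j k = 1 := fun j => (hσ j).2
  have hnn : ∀ j k, 0 ≤ σ j k := fun j k => (hσ j).1 k
  -- pointwise claim per pure action k
  have hk : ∀ k : Fin K,
      mixedExt φ (Function.update σ i (purePt b)) - mixedExt φ (Function.update σ i (purePt k))
        ≥ mixedExt (u i) (Function.update σ i (purePt b))
          - mixedExt (u i) (Function.update σ i (purePt k)) - δ := by
    intro k
    have hpotk : mixedExt φ (Function.update σ i (purePt b))
        - mixedExt φ (Function.update σ i (purePt k))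
        = mixedExt (uhat i) (Function.update σ i (purePt b))
          - mixedExt (uhat i) (Function.update σ i (purePt k)) := by
      rw [mixedExt_pure_sub, mixedExt_pure_sub]
      refine Finset.sum_congr rfl fun a _ => ?_
      congr 2
      have h := hpot i (Function.update a i k) b
      rw [Function.update_idem] at h
      have h2 := hpot i (Function.update a i k) k
      rw [Function.update_idem] at h2
      -- φ(upd b) - φ(upd k) = uhat(upd b) - uhat(upd k)
      linarith
    have hnearK : |(mixedExt (u i) (Function.update σ i (purePt b))
          - mixedExt (u i) (Function.update σ i (purePt k)))
        - (mixedExt (uhat i) (Function.update σ i (purePt b))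
          - mixedExt (uhat i) (Function.update σ i (purePt k)))| ≤ δ := by
      have hd : ∀ τ : Fin K → ℝ,
          mixedExt (u i) (Function.update σ i τ) - mixedExt (uhat i) (Function.update σ i τ)
            = mixedExt (fun a => u i a - uhat i a) (Function.update σ i τ) :=
        fun τ => (mixedExt_sub _ _ _).symm
      have e1 : (mixedExt (u i) (Function.update σ i (purePt b))
          - mixedExt (u i) (Function.update σ i (purePt k)))
        - (mixedExt (uhat i) (Function.update σ i (purePt b))
          - mixedExt (uhat i) (Function.update σ i (purePt k)))
        = mixedExt (fun a => u i a - uhat i a) (Function.update σ i (purePt b))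
          - mixedExt (fun a => u i a - uhat i a) (Function.update σ i (purePt k)) := by
        rw [← hd, ← hd]; ring
      rw [e1, mixedExt_pure_sub]
      set g : (Fin N → Fin K) → ℝ := fun a => u i a - uhat i a with hg
      calc |∑ a : Fin N → Fin K, (if a i = k then (1:ℝ) else 0) *
              ((g (Function.update a i b) - g (Function.update a i k))
                * ∏ j ∈ Finset.univ.erase i, σ j (a j))|
          ≤ ∑ a : Fin N → Fin K, (if a i = k then (1:ℝ) else 0) *
              (δ * ∏ j ∈ Finset.univ.erase i, σ j (a j)) := by
            refine le_trans (Finset.abs_sum_le_sum_abs _ _) (Finset.sum_le_sum fun a _ => ?_)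
            rw [abs_mul, abs_mul]
            have hind : |if a i = k then (1:ℝ) else 0| = if a i = k then (1:ℝ) else 0 := by
              split <;> norm_num
            rw [hind]
            refine mul_le_mul_of_nonneg_left ?_ (by split <;> norm_num)
            have hP : |∏ j ∈ Finset.univ.erase i, σ j (a j)|
                = ∏ j ∈ Finset.univ.erase i, σ j (a j) :=
              abs_of_nonneg (Finset.prod_nonneg fun j _ => hnn j (a j))
            rw [hP]
            refine mul_le_mul_of_nonneg_right ?_
              (Finset.prod_nonneg fun j _ => hnn j (a j))
            have hgd : g (Function.update a i b) - g (Function.update a i k)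
                = (u i (Function.update a i b) - u i (Function.update a i k))
                  - (uhat i (Function.update a i b) - uhat i (Function.update a i k)) := by
              simp only [hg]; ring
            rw [hgd]
            have h1 := hnear i (Function.update a i k) b
            rw [Function.update_idem] at h1
            exact h1
        _ = δ * ∑ a : Fin N → Fin K, (if a i = k then (1:ℝ) else 0) *
              ∏ j ∈ Finset.univ.erase i, σ j (a j) := by
            rw [Finset.mul_sum]
            exact Finset.sum_congr rfl fun a _ => by ring
        _ = δ := by rw [sum_ind_prod σ i k hsum, mul_one]
    have := abs_le.1 hnearK
    linarith
  -- now average over k with weights σ i k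
  have hΦ : mixedExt φ σ = ∑ k, σ i k * mixedExt φ (Function.update σ i (purePt k)) :=
    mixedExt_self_eq_sum _ _ i
  have hU : mixedExt (u i) σ
      = ∑ k, σ i k * mixedExt (u i) (Function.update σ i (purePt k)) :=
    mixedExt_self_eq_sum _ _ i
  have hb : mixedExt φ (Function.update σ i (purePt b))
      = ∑ k, σ i k * mixedExt φ (Function.update σ i (purePt b)) := by
    rw [← Finset.sum_mul, hsum i, one_mul]
  have hbU : mixedExt (u i) (Function.update σ i (purePt b))
      = ∑ k, σ i k * mixedExt (u i) (Function.update σ i (purePt b)) := by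
    rw [← Finset.sum_mul, hsum i, one_mul]
  have hδsum : δ = ∑ k, σ i k * δ := by rw [← Finset.sum_mul, hsum i, one_mul]
  rw [hΦ, hU]
  conv_lhs => rw [hb]
  rw [ge_iff_le, hbU]
  nth_rewrite 1 [hδsum]
  rw [← Finset.sum_sub_distrib, ← Finset.sum_sub_distrib, ← Finset.sum_sub_distrib]
  refine Finset.sum_le_sum fun k _ => ?_
  have := hk k
  have hnk := hnn i k
  nlinarith [hk k]

/-- Abstract infection lemma for consensus over a time-varying network. -/
lemma infection_lb {N : ℕ} (G : SimpleGraph (Fin N))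
    (W : ℕ → Fin N → Fin N → ℝ) (x : ℕ → Fin N → ℝ)
    (j : Fin N) (η : ℝ) (hη0 : 0 < η) (hη1 : η ≤ 1)
    (TB : ℕ) (T₀ : ℕ) (hT₀ : T₀ = N * TB)
    (β d : ℝ) (hd : 0 ≤ d)
    (hWnn : ∀ r i l, 0 ≤ W r i l)
    (hWsum : ∀ r i, ∑ l, W r i l = 1)
    (hWself : ∀ r i, η ≤ W r i i)
    (hrec : ∀ r i, i ≠ j → x (r + 1) i = ∑ l, W r i l * x r l)
    (hanchor : ∀ r, r ≤ T₀ → β + d ≤ x r j)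
    (hlb : ∀ r, r ≤ T₀ → ∀ i, β ≤ x r i)
    (hreach : ∀ i, G.Reachable i j)
    (hact : ∀ i v, G.Adj i v → ∀ m, ∃ τ < TB, η ≤ W (m * TB + τ) i v) :
    ∀ i, β + η ^ T₀ * d ≤ x T₀ i := by
  classical
  have hpow1 : ∀ r : ℕ, η ^ r ≤ 1 := fun r => pow_le_one₀ (le_of_lt hη0) hη1
  have hpownn : ∀ r : ℕ, (0:ℝ) ≤ η ^ r := fun r => pow_nonneg (le_of_lt hη0) r
  have inf_anchor : ∀ r, r ≤ T₀ → β + η ^ r * d ≤ x r j := by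
    intro r hr
    have := hanchor r hr
    have h2 : η ^ r * d ≤ d := by nlinarith [hpow1 r, hpownn r]
    linarith
  have inf_step : ∀ r, r + 1 ≤ T₀ → ∀ i l, η ≤ W r i l →
      β + η ^ r * d ≤ x r l → β + η ^ (r + 1) * d ≤ x (r + 1) i := by
    intro r hr i l hwl hinfl
    by_cases hij : i = j
    · subst hij; exact inf_anchor (r + 1) hr
    · rw [hrec r i hij]
      have hsum : ∑ l', W r i l' * x r l'
          = β + ∑ l', W r i l' * (x r l' - β) := by
        have hpt : ∀ l', W r i l' * x r l' = W r i l' * (x r l' - β) + W r i l' * β := by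
          intro l'; ring
        rw [Finset.sum_congr rfl fun l' _ => hpt l', Finset.sum_add_distrib,
          ← Finset.sum_mul, hWsum r i, one_mul]
        ring
      rw [hsum]
      have h1 : W r i l * (x r l - β) ≤ ∑ l', W r i l' * (x r l' - β) :=
        Finset.single_le_sum (f := fun l' => W r i l' * (x r l' - β))
          (fun l' _ => mul_nonneg (hWnn r i l')
            (sub_nonneg.2 (hlb r (by omega) l'))) (Finset.mem_univ l)
      have h2 : η ^ (r + 1) * d ≤ W r i l * (x r l - β) := by
        have hx : η ^ r * d ≤ x r l - β := by linarith
        calc η ^ (r + 1) * d = η * (η ^ r * d) := by ring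
          _ ≤ W r i l * (η ^ r * d) :=
              mul_le_mul_of_nonneg_right hwl (mul_nonneg (hpownn r) hd)
          _ ≤ W r i l * (x r l - β) :=
              mul_le_mul_of_nonneg_left hx (hWnn r i l)
      linarith
  have inf_mono : ∀ q r (i : Fin N), r + q ≤ T₀ →
      β + η ^ r * d ≤ x r i → β + η ^ (r + q) * d ≤ x (r + q) i := by
    intro q
    induction q with
    | zero => intro r i _ h; simpa using h
    | succ q ih =>
      intro r i hq h
      have h1 := ih r i (by omega) h
      have h2 := inf_step (r + q) (by omega) i i (hWself (r + q) i) h1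
      have : r + (q + 1) = (r + q) + 1 := by omega
      rw [this]
      exact h2
  have walk_claim : ∀ n (i : Fin N) (p : G.Walk i j), p.IsPath → p.length = n →
      β + η ^ (n * TB) * d ≤ x (n * TB) i := by
    intro n
    induction n with
    | zero =>
      intro i p hp hlen
      have : i = j := by
        cases p with
        | nil => rfl
        | cons h q => simp [SimpleGraph.Walk.length_cons] at hlen
      subst this
      simpa using inf_anchor 0 (Nat.zero_le _)
    | succ n ih =>
      intro i p hp hlen
      cases p with
      | nil => simp at hlen
      | cons h q =>
        rename_i v
        have hq : q.length = n := by
          simp [SimpleGraph.Walk.length_cons] at hlen; omega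
        have hqpath : q.IsPath := hp.of_cons
        have hinfv := ih v q hqpath hq
        have hlenN : (SimpleGraph.Walk.cons h q).length < N := by
          have := hp.length_lt
          simpa using this
        have hn1 : n + 1 ≤ N := by
          simp [SimpleGraph.Walk.length_cons, hq] at hlenN; omega
        have hmul : (n + 1) * TB = n * TB + TB := by ring
        have hlenT : (n + 1) * TB ≤ T₀ := by
          rw [hT₀]; exact Nat.mul_le_mul_right TB hn1
        obtain ⟨τ, hτ, hwτ⟩ := hact i v h n
        have h1 : β + η ^ (n * TB + τ) * d ≤ x (n * TB + τ) v :=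
          inf_mono τ (n * TB) v (by omega) hinfv
        have h2 := inf_step (n * TB + τ) (by omega) i v hwτ h1
        have h3 := inf_mono ((n + 1) * TB - (n * TB + τ + 1)) (n * TB + τ + 1) i
          (by omega) h2
        have harith : n * TB + τ + 1 + ((n + 1) * TB - (n * TB + τ + 1)) = (n + 1) * TB := by
          omega
        rwa [harith] at h3
  intro i
  obtain ⟨p0⟩ := hreach i
  let p : G.Path i j := p0.toPath
  have hppath : (p : G.Walk i j).IsPath := p.2
  have hlenp : (p : G.Walk i j).length < N := hppath.length_lt.trans_le (by simp)
  have hclaim := walk_claim (p : G.Walk i j).length i p hppath rfl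
  have hle : (p : G.Walk i j).length * TB ≤ T₀ := by
    rw [hT₀]; exact Nat.mul_le_mul_right TB (le_of_lt hlenp)
  have hfin := inf_mono (T₀ - (p : G.Walk i j).length * TB)
    ((p : G.Walk i j).length * TB) i (by omega) hclaim
  have harith : (p : G.Walk i j).length * TB + (T₀ - (p : G.Walk i j).length * TB) = T₀ := by
    omega
  rwa [harith] at hfin

/-- Lemma 1: consensus — estimates track empirical frequencies at rate C₁/t. -/
lemma consensus_bound {N K : ℕ}
    (Adj : ℕ → Fin N → Fin N → Prop)
    (hAdjSymm : ∀ t i j, Adj t i j → Adj t j i)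
    (w : ℕ → Fin N → Fin N → Fin N → ℝ)
    (f : ℕ → Fin N → Fin K → ℝ)
    (υ : ℕ → Fin N → Fin N → Fin K → ℝ)
    (hconn : (SimpleGraph.fromRel fun i j : Fin N =>
      {t : ℕ | Adj t i j}.Infinite).Connected)
    (TB : ℕ) (hTB : 0 < TB)
    (hcom : ∀ i j, {t : ℕ | Adj t i j}.Infinite → ∀ t, 1 ≤ t → ∃ τ < TB, Adj (t + τ) i j)
    (η : ℝ) (hη0 : 0 < η) (hη1 : η < 1)
    (hwpos : ∀ t, 1 ≤ t → ∀ j i l : Fin N, (Adj t i l ∨ l = i) → η ≤ w t j i l)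
    (hwzero : ∀ t, 1 ≤ t → ∀ j i l : Fin N, ¬(Adj t i l ∨ l = i) → w t j i l = 0)
    (hwsum : ∀ t, 1 ≤ t → ∀ j i, ∑ l, w t j i l = 1)
    (hfIcc : ∀ t i k, 0 ≤ f t i k ∧ f t i k ≤ 1)
    (hdrift : ∀ t (i : Fin N) (k : Fin K), |f (t+1) i k - f t i k| ≤ 1 / ((t:ℝ)+1))
    (hυIcc : ∀ t i j k, 0 ≤ υ t i j k ∧ υ t i j k ≤ 1)
    (hυself : ∀ t, 1 ≤ t → ∀ i, υ t i i = f t i)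
    (hυrec : ∀ t, 1 ≤ t → ∀ i j, j ≠ i → ∀ k,
      υ t i j k = ∑ l, w t j i l * υ (t - 1) l j k)
    (hinit : ∀ i j, υ 0 i j = f 0 j) :
    ∃ C₁ > (0:ℝ), ∀ t : ℕ, 1 ≤ t → ∀ i j k, |υ t i j k - f t j k| ≤ C₁ / t := by
  classical
  have hN : 0 < N := Fin.pos_iff_nonempty.2 hconn.nonempty
  set T₀ : ℕ := N * TB with hT₀def
  have hT₀pos : 0 < T₀ := Nat.mul_pos hN hTB
  set lam : ℝ := η ^ T₀ with hlamdef
  have hlam0 : 0 < lam := pow_pos hη0 _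
  have hlam1 : lam ≤ 1 := pow_le_one₀ (le_of_lt hη0) (le_of_lt hη1)
  -- anchor drift over a window
  have hwin : ∀ s : ℕ, 1 ≤ s → ∀ (j : Fin N) (kk : Fin K) (r : ℕ),
      |f (s + r) j kk - f s j kk| ≤ (r : ℝ) / s := by
    intro s hs j kk r
    induction r with
    | zero => simp
    | succ r ih =>
      have h1 := hdrift (s + r) j kk
      have hsr : (1:ℝ) / ((s + r : ℕ) + 1) ≤ 1 / s := by
        apply one_div_le_one_div_of_le
        · exact_mod_cast hs
        · push_cast; linarith
      have e : s + (r + 1) = (s + r) + 1 := by omega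
      rw [e]
      calc |f ((s + r) + 1) j kk - f s j kk|
          ≤ |f ((s + r) + 1) j kk - f (s + r) j kk| + |f (s + r) j kk - f s j kk| :=
            abs_sub_le _ _ _
        _ ≤ 1 / ((s + r : ℕ) + 1) + (r : ℝ) / s := by
            push_cast at h1 ⊢; linarith
        _ ≤ 1 / s + (r : ℝ) / s := by linarith
        _ = ((r + 1 : ℕ) : ℝ) / s := by push_cast; ring
  -- weights nonneg
  have hwnn : ∀ t, 1 ≤ t → ∀ j i l, 0 ≤ w t j i l := by
    intro t ht j i l
    by_cases h : Adj t i l ∨ l = i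
    · exact le_trans (le_of_lt hη0) (hwpos t ht j i l h)
    · rw [hwzero t ht j i l h]
  -- the key window contraction
  have key : ∀ s : ℕ, 1 ≤ s → ∀ (j : Fin N) (kk : Fin K) (d : ℝ), 0 ≤ d →
      (∀ i, |υ s i j kk - f s j kk| ≤ d) →
      ∀ i, |υ (s + T₀) i j kk - f (s + T₀) j kk|
        ≤ (1 - lam) * d + 2 * T₀ / s := by
    intro s hs j kk d hd hclose
    have hspos : (0:ℝ) < s := by exact_mod_cast hs
    have hT₀s : (0:ℝ) ≤ (T₀ : ℝ) / s := by positivity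
    -- common data
    set G : SimpleGraph (Fin N) :=
      SimpleGraph.fromRel (fun i j : Fin N => {t : ℕ | Adj t i j}.Infinite) with hG
    have hreach : ∀ i, G.Reachable i j := fun i => hconn.preconnected i j
    set W : ℕ → Fin N → Fin N → ℝ := fun r i l => w (s + r + 1) j i l with hW
    have hWnn : ∀ r i l, 0 ≤ W r i l := fun r i l => hwnn (s + r + 1) (by omega) j i l
    have hWsum : ∀ r i, ∑ l, W r i l = 1 := fun r i => hwsum (s + r + 1) (by omega) j i
    have hWself : ∀ r i, η ≤ W r i i := fun r i =>
      hwpos (s + r + 1) (by omega) j i i (Or.inr rfl)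
    have hact : ∀ i v, G.Adj i v → ∀ m, ∃ τ < TB, η ≤ W (m * TB + τ) i v := by
      intro i v hadj m
      rw [hG, SimpleGraph.fromRel_adj] at hadj
      obtain ⟨hne, hor⟩ := hadj
      have hinf : {t : ℕ | Adj t i v}.Infinite := by
        rcases hor with h | h
        · exact h
        · exact h.mono (fun t ht => hAdjSymm t v i ht)
      obtain ⟨τ, hτ, hadjτ⟩ := hcom i v hinf (s + m * TB + 1) (by omega)
      refine ⟨τ, hτ, ?_⟩
      have he : s + (m * TB + τ) + 1 = s + m * TB + 1 + τ := by omega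
      show η ≤ w (s + (m * TB + τ) + 1) j i v
      rw [he]
      exact hwpos _ (by omega) j i v (Or.inl hadjτ)
    have hself : ∀ r i, υ (s + r) i i = f (s + r) i := fun r i =>
      hυself (s + r) (by omega) i
    -- lower bound induction (and its mirror)
    have hlow : ∀ (r : ℕ) (i : Fin N), f s j kk - d - (r : ℝ) / s ≤ υ (s + r) i j kk := by
      intro r
      induction r with
      | zero =>
        intro i
        have := hclose i
        rw [abs_le] at this
        simp only [Nat.add_zero, Nat.cast_zero, zero_div]
        linarith [this.2]
      | succ r ih =>
        intro i
        by_cases hij : i = j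
        · rw [hij, hself (r+1) j]
          have := hwin s hs j kk (r + 1)
          rw [abs_le] at this
          push_cast at this ⊢
          linarith [this.1, hd]
        · have e : s + (r + 1) = (s + r + 1) := by omega
          rw [e, hυrec (s + r + 1) (by omega) i j (fun h => hij h.symm) kk]
          have e2 : s + r + 1 - 1 = s + r := by omega
          rw [e2]
          have hge : ∀ l, w (s + r + 1) j i l * (f s j kk - d - (r:ℝ)/s)
              ≤ w (s + r + 1) j i l * υ (s + r) l j kk := fun l =>
            mul_le_mul_of_nonneg_left (ih l) (hwnn (s + r + 1) (by omega) j i l)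
          have hsum1 : ∑ l, w (s + r + 1) j i l * (f s j kk - d - (r:ℝ)/s)
              = f s j kk - d - (r:ℝ)/s := by
            rw [← Finset.sum_mul, hwsum (s + r + 1) (by omega) j i, one_mul]
          have h3 : f s j kk - d - (r:ℝ)/s ≤ ∑ l, w (s + r + 1) j i l * υ (s + r) l j kk := by
            rw [← hsum1]; exact Finset.sum_le_sum fun l _ => hge l
          have h4 : ((r:ℝ))/s ≤ ((r:ℝ)+1)/s :=
            div_le_div_of_nonneg_right (by linarith) (le_of_lt hspos)
          push_cast at h4 ⊢
          linarith
    have hhigh : ∀ r (i : Fin N), υ (s + r) i j kk ≤ f s j kk + d + (r : ℝ) / s := by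
      intro r
      induction r with
      | zero =>
        intro i
        have := hclose i
        rw [abs_le] at this
        simp only [Nat.add_zero, Nat.cast_zero, zero_div]
        linarith [this.1]
      | succ r ih =>
        intro i
        by_cases hij : i = j
        · rw [hij, hself (r+1) j]
          have := hwin s hs j kk (r + 1)
          rw [abs_le] at this
          push_cast at this ⊢
          linarith [this.2, hd]
        · have e : s + (r + 1) = (s + r + 1) := by omega
          rw [e, hυrec (s + r + 1) (by omega) i j (fun h => hij h.symm) kk]
          have e2 : s + r + 1 - 1 = s + r := by omega
          rw [e2]
          have hge : ∀ l, w (s + r + 1) j i l * υ (s + r) l j kk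
              ≤ w (s + r + 1) j i l * (f s j kk + d + (r:ℝ)/s) := fun l =>
            mul_le_mul_of_nonneg_left (ih l) (hwnn (s + r + 1) (by omega) j i l)
          have hsum1 : ∑ l, w (s + r + 1) j i l * (f s j kk + d + (r:ℝ)/s)
              = f s j kk + d + (r:ℝ)/s := by
            rw [← Finset.sum_mul, hwsum (s + r + 1) (by omega) j i, one_mul]
          have h3 : ∑ l, w (s + r + 1) j i l * υ (s + r) l j kk
              ≤ f s j kk + d + (r:ℝ)/s := by
            rw [← hsum1]; exact Finset.sum_le_sum fun l _ => hge l
          have h4 : ((r:ℝ))/s ≤ ((r:ℝ)+1)/s :=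
            div_le_div_of_nonneg_right (by linarith) (le_of_lt hspos)
          push_cast at h4 ⊢
          linarith
    -- apply the infection lemma, lower direction
    have low := infection_lb G W (fun r i => υ (s + r) i j kk) j η hη0 (le_of_lt hη1)
      TB T₀ hT₀def (f s j kk - d - (T₀ : ℝ) / s) d hd hWnn hWsum hWself
      (fun r i hij => by
        show υ (s + (r + 1)) i j kk = ∑ l, W r i l * υ (s + r) l j kk
        have e : s + (r + 1) = (s + r + 1) := by omega
        rw [e, hυrec (s + r + 1) (by omega) i j (fun h => hij h.symm) kk]
        have e2 : s + r + 1 - 1 = s + r := by omega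
        rw [e2])
      (fun r hr => by
        show f s j kk - d - (T₀:ℝ)/s + d ≤ υ (s + r) j j kk
        rw [hself r j]
        have h1 := hwin s hs j kk r
        rw [abs_le] at h1
        have h2 : ((r:ℝ))/s ≤ (T₀:ℝ)/s :=
          div_le_div_of_nonneg_right (by exact_mod_cast hr) (le_of_lt hspos)
        linarith [h1.1])
      (fun r hr i => by
        show f s j kk - d - (T₀:ℝ)/s ≤ υ (s + r) i j kk
        have h1 := hlow r i
        have h2 : ((r:ℝ))/s ≤ (T₀:ℝ)/s :=
          div_le_div_of_nonneg_right (by exact_mod_cast hr) (le_of_lt hspos)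
        linarith)
      hreach hact
    -- upper direction via negation
    have high := infection_lb G W (fun r i => - υ (s + r) i j kk) j η hη0 (le_of_lt hη1)
      TB T₀ hT₀def (- f s j kk - d - (T₀ : ℝ) / s) d hd hWnn hWsum hWself
      (fun r i hij => by
        show - υ (s + (r + 1)) i j kk = ∑ l, W r i l * (- υ (s + r) l j kk)
        have e : s + (r + 1) = (s + r + 1) := by omega
        rw [e, hυrec (s + r + 1) (by omega) i j (fun h => hij h.symm) kk]
        have e2 : s + r + 1 - 1 = s + r := by omega
        rw [e2, ← Finset.sum_neg_distrib]
        exact Finset.sum_congr rfl fun l _ => by ring)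
      (fun r hr => by
        show - f s j kk - d - (T₀:ℝ)/s + d ≤ - υ (s + r) j j kk
        rw [hself r j]
        have h1 := hwin s hs j kk r
        rw [abs_le] at h1
        have h2 : ((r:ℝ))/s ≤ (T₀:ℝ)/s :=
          div_le_div_of_nonneg_right (by exact_mod_cast hr) (le_of_lt hspos)
        linarith [h1.2])
      (fun r hr i => by
        show - f s j kk - d - (T₀:ℝ)/s ≤ - υ (s + r) i j kk
        have h1 := hhigh r i
        have h2 : ((r:ℝ))/s ≤ (T₀:ℝ)/s :=
          div_le_div_of_nonneg_right (by exact_mod_cast hr) (le_of_lt hspos)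
        linarith)
      hreach hact
    intro i
    have hl : f s j kk - d - (T₀:ℝ)/s + lam * d ≤ υ (s + T₀) i j kk := by
      simpa using low i
    have hh : - f s j kk - d - (T₀:ℝ)/s + lam * d ≤ - υ (s + T₀) i j kk := by
      simpa using high i
    have hwin2 := hwin s hs j kk T₀
    rw [abs_le] at hwin2
    rw [abs_le]
    have h2T : 2 * (T₀:ℝ) / s = (T₀:ℝ)/s + (T₀:ℝ)/s := by ring
    rw [h2T]
    constructor
    · linarith [hwin2.2]
    · linarith [hwin2.1]
  -- solve the recurrence
  have hceil : (0:ℝ) ≤ 2 * (T₀:ℝ) / lam := by positivity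
  set Tbig : ℕ := T₀ + 1 + Nat.ceil (2 * (T₀:ℝ) / lam) with hTbig
  set C₁ : ℝ := max ((Tbig:ℝ)) (4 * (T₀:ℝ) / lam) with hC₁
  have hC₁pos : 0 < C₁ := lt_of_lt_of_le (by positivity : (0:ℝ) < Tbig) (le_max_left _ _)
  refine ⟨C₁, hC₁pos, ?_⟩
  intro t
  induction t using Nat.strong_induction_on with
  | _ t IH =>
    intro ht i j k
    have htpos : (0:ℝ) < t := by exact_mod_cast ht
    by_cases hbig : t < Tbig
    · -- trivial bound
      have h1 : |υ t i j k - f t j k| ≤ 1 := by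
        have hu := hυIcc t i j k
        have hf := hfIcc t j k
        rw [abs_le]; constructor <;> linarith [hu.1, hu.2, hf.1, hf.2]
      have h2 : (1:ℝ) ≤ C₁ / t := by
        rw [le_div_iff₀ htpos, one_mul]
        calc (t:ℝ) ≤ Tbig := by exact_mod_cast le_of_lt hbig
          _ ≤ C₁ := le_max_left _ _
      linarith
    · push_neg at hbig
      set s : ℕ := t - T₀ with hsdef
      have hst : s + T₀ = t := by omega
      have hs1 : 1 ≤ s := by omega
      have hslt : s < t := by omega
      have hd := fun i' j' k' => IH s hslt hs1 i' j' k'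
      have hkey := key s hs1 j k (C₁ / s) (by positivity) (fun i' => hd i' j k) i
      rw [hst] at hkey
      refine le_trans hkey ?_
      -- numeric: (1-lam) * (C₁/s) + 2T₀/s ≤ C₁/t
      have hspos : (0:ℝ) < s := by exact_mod_cast hs1
      have hsceil : (2 * (T₀:ℝ) / lam) ≤ s := by
        have h1 : (Nat.ceil (2 * (T₀:ℝ) / lam) : ℝ) ≥ 2 * (T₀:ℝ) / lam := Nat.le_ceil _
        have h2 : (s:ℝ) ≥ (Nat.ceil (2 * (T₀:ℝ) / lam) + 1 : ℕ) := by
          have : Nat.ceil (2 * (T₀:ℝ) / lam) + 1 ≤ s := by omega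
          exact_mod_cast this
        push_cast at h2
        linarith
      have hlamt : 2 * (T₀:ℝ) ≤ lam * s := by
        rw [div_le_iff₀ hlam0] at hsceil
        linarith
      have hC4 : 4 * (T₀:ℝ) ≤ lam * C₁ := by
        have : (4 * (T₀:ℝ) / lam) ≤ C₁ := le_max_right _ _
        rw [div_le_iff₀ hlam0] at this
        linarith
      have htr : (t:ℝ) = (s:ℝ) + (T₀:ℝ) := by exact_mod_cast hst.symm
      have hT₀nn : (0:ℝ) ≤ (T₀:ℝ) := Nat.cast_nonneg _
      have hmain : ((1 - lam) * C₁ + 2 * (T₀:ℝ)) * ((s:ℝ) + T₀) ≤ C₁ * s := by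
        nlinarith [mul_le_mul_of_nonneg_right hC4 (le_of_lt hspos),
          mul_le_mul_of_nonneg_right hlamt (le_of_lt hC₁pos),
          mul_le_mul_of_nonneg_right hC4 hT₀nn,
          mul_nonneg (mul_nonneg (le_of_lt hlam0) (le_of_lt hC₁pos)) hT₀nn]
      have heq : (1 - lam) * (C₁ / s) + 2 * (T₀:ℝ) / s = ((1 - lam) * C₁ + 2 * T₀) / s := by
        ring
      rw [heq, div_le_div_iff₀ hspos htpos, htr]
      exact hmain

/-- Lemma 2: one-step potential increase along DFP in a
δ-near potential game, outside the ε-equilibrium set. -/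
theorem dfp_potential_increase {N K : ℕ}
    -- the game
    (u : Fin N → (Fin N → Fin K) → ℝ)
    -- time-varying communication network: `Adj t i j` iff `(i,j) ∈ E_t`
    (Adj : ℕ → Fin N → Fin N → Prop)
    (hAdjSymm : ∀ t i j, Adj t i j → Adj t j i)
    -- communication weights: `w t j i l` is `w^i_{jl,t}`
    (w : ℕ → Fin N → Fin N → Fin N → ℝ)
    -- actions, empirical frequencies and local estimates of the DFP iterates:
    -- `υ t i j` is agent `i`'s estimate `υ^i_{j,t}` of `f_{j,t}`
    (a : ℕ → Fin N → Fin K)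
    (f : ℕ → Fin N → Fin K → ℝ)
    (υ : ℕ → Fin N → Fin N → Fin K → ℝ)
    -- Assumption 1 (i): connectivity of the graph of infinitely occurring edges
    (hconn : (SimpleGraph.fromRel fun i j : Fin N =>
      {t : ℕ | Adj t i j}.Infinite).Connected)
    -- Assumption 1 (ii): bounded communication intervals
    (hbddcom : ∃ TB : ℕ, 0 < TB ∧ ∀ i j, {t : ℕ | Adj t i j}.Infinite →
      ∀ t, 1 ≤ t → ∃ τ < TB, Adj (t + τ) i j)
    -- Assumption 2: weights are positive on neighbors, zero otherwise,
    -- each agent fully trusts itself about itself, and rows sum to one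
    (η : ℝ) (hη0 : 0 < η) (hη1 : η < 1)
    (hwpos : ∀ t, 1 ≤ t → ∀ j i l : Fin N, (Adj t i l ∨ l = i) → η ≤ w t j i l)
    (hwzero : ∀ t, 1 ≤ t → ∀ j i l : Fin N, ¬(Adj t i l ∨ l = i) → w t j i l = 0)
    (hwself : ∀ t, 1 ≤ t → ∀ i, w t i i i = 1)
    (hwsum : ∀ t, 1 ≤ t → ∀ j i, ∑ l, w t j i l = 1)
    -- DFP dynamics: empirical frequency update
    (hf0 : ∀ i, f 0 i ∈ stdSimplex ℝ (Fin K))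
    (hfrec : ∀ t, 1 ≤ t → ∀ i k,
      f t i k = ((t : ℝ) - 1) / t * f (t - 1) i k + (1 / t) * purePt (a t i) k)
    -- DFP dynamics: best response against local estimates
    (hbr : ∀ t, 1 ≤ t → ∀ i, ∀ k : Fin K,
      mixedExt (u i) (Function.update (fun j => υ (t - 1) i j) i (purePt (a t i))) ≥
        mixedExt (u i) (Function.update (fun j => υ (t - 1) i j) i (purePt k)))
    -- DFP dynamics: estimate updates
    (hυself : ∀ t, 1 ≤ t → ∀ i, υ t i i = f t i)
    (hυrec : ∀ t, 1 ≤ t → ∀ i j, j ≠ i → ∀ k,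
      υ t i j k = ∑ l, w t j i l * υ (t - 1) l j k)
    -- initial estimates agree with initial empirical frequencies
    (hinit : ∀ i j, υ 0 i j = f 0 j)
    -- Γ is a δ-near potential game whose closest potential game `uhat`
    -- has potential `φ`
    (δ : ℝ) (hδ : 0 ≤ δ)
    (uhat : Fin N → (Fin N → Fin K) → ℝ) (φ : (Fin N → Fin K) → ℝ)
    (hpot : IsPotential uhat φ)
    (hnear : PairwiseDiffLe u uhat δ) :
    ∀ ε : ℝ, 0 ≤ ε → ∃ C > (0 : ℝ), ∃ T : ℕ, ∀ t : ℕ, T ≤ t →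
      ¬ IsEpsNash u ε (f t) →
      mixedExt φ (f (t + 1)) - mixedExt φ (f t) ≥
        (ε - N * δ) / (t + 1) - C * Real.log t / (t : ℝ) ^ 2 := by
  classical
  intro ε hε
  -- empirical frequencies stay in the simplex
  have hfsimp : ∀ t i, f t i ∈ stdSimplex ℝ (Fin K) := by
    intro t
    induction t with
    | zero => exact hf0
    | succ t ih =>
      intro i
      constructor
      · intro k
        rw [hfrec (t+1) (by omega) i k]
        simp only [Nat.add_sub_cancel]
        have h1 : (0:ℝ) ≤ (((t+1 : ℕ):ℝ) - 1) / ((t+1:ℕ):ℝ) := by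
          apply div_nonneg <;> push_cast <;> linarith
        have h2 : (0:ℝ) ≤ 1 / ((t+1:ℕ):ℝ) := by positivity
        exact add_nonneg (mul_nonneg h1 ((ih i).1 k))
          (mul_nonneg h2 (purePt_nonneg (a (t+1) i) k))
      · have hrw : ∀ k, f (t+1) i k = (((t+1 : ℕ):ℝ) - 1) / ((t+1:ℕ):ℝ) * f t i k
            + (1 / ((t+1:ℕ):ℝ)) * purePt (a (t+1) i) k := by
          intro k
          rw [hfrec (t+1) (by omega) i k]
          simp only [Nat.add_sub_cancel]
        rw [Finset.sum_congr rfl fun k _ => hrw k, Finset.sum_add_distrib,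
          ← Finset.mul_sum, ← Finset.mul_sum, (ih i).2, purePt_sum]
        push_cast
        have : ((t:ℝ) + 1) ≠ 0 := by positivity
        field_simp
        ring
  have hfIcc : ∀ t (i : Fin N) (k : Fin K), 0 ≤ f t i k ∧ f t i k ≤ 1 := by
    intro t i k
    refine ⟨(hfsimp t i).1 k, ?_⟩
    have h1 : f t i k ≤ ∑ k', f t i k' :=
      Finset.single_le_sum (fun k' _ => (hfsimp t i).1 k') (Finset.mem_univ k)
    rw [(hfsimp t i).2] at h1
    exact h1
  have hdrift : ∀ t (i : Fin N) (k : Fin K), |f (t+1) i k - f t i k| ≤ 1 / ((t:ℝ)+1) := by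
    intro t i k
    rw [hfrec (t+1) (by omega) i k]
    simp only [Nat.add_sub_cancel]
    have ht1 : ((t:ℝ) + 1) ≠ 0 := by positivity
    have e : (((t+1 : ℕ):ℝ) - 1) / ((t+1:ℕ):ℝ) * f t i k
        + (1 / ((t+1:ℕ):ℝ)) * purePt (a (t+1) i) k - f t i k
        = (1/((t:ℝ)+1)) * (purePt (a (t+1) i) k - f t i k) := by
      push_cast
      field_simp
      ring
    rw [e, abs_mul]
    have h1 : |(1:ℝ)/((t:ℝ)+1)| = 1/((t:ℝ)+1) := abs_of_nonneg (by positivity)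
    rw [h1]
    have h2 : |purePt (a (t+1) i) k - f t i k| ≤ 1 := by
      rw [abs_le]
      have := hfIcc t i k
      have := purePt_nonneg (a (t+1) i) k
      have := purePt_le_one (a (t+1) i) k
      constructor <;> linarith
    nlinarith [h2, (by positivity : (0:ℝ) ≤ 1/((t:ℝ)+1))]
  have hwnn : ∀ t, 1 ≤ t → ∀ j i l, 0 ≤ w t j i l := by
    intro t ht j i l
    by_cases h : Adj t i l ∨ l = i
    · exact le_trans (le_of_lt hη0) (hwpos t ht j i l h)
    · rw [hwzero t ht j i l h]
  have hυIcc : ∀ t (i j : Fin N) (k : Fin K), 0 ≤ υ t i j k ∧ υ t i j k ≤ 1 := by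
    intro t
    induction t with
    | zero =>
      intro i j k
      rw [hinit i j]
      exact hfIcc 0 j k
    | succ t ih =>
      intro i j k
      by_cases hij : j = i
      · subst hij
        rw [hυself (t+1) (by omega) j]
        exact hfIcc (t+1) j k
      · rw [hυrec (t+1) (by omega) i j hij k]
        simp only [Nat.add_sub_cancel]
        constructor
        · exact Finset.sum_nonneg fun l _ =>
            mul_nonneg (hwnn (t+1) (by omega) j i l) (ih l j k).1
        · have hle : ∑ l, w (t+1) j i l * υ t l j k ≤ ∑ l, w (t+1) j i l := by
            refine Finset.sum_le_sum fun l _ => ?_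
            have h1 := (ih l j k).2
            have h2 := (ih l j k).1
            have h3 := hwnn (t+1) (by omega) j i l
            nlinarith
          exact hle.trans (le_of_eq (hwsum (t+1) (by omega) j i))
  -- consensus
  obtain ⟨TB, hTB, hcom⟩ := hbddcom
  obtain ⟨C₁, hC₁pos, hcons⟩ := consensus_bound Adj hAdjSymm w f υ hconn TB hTB hcom
    η hη0 hη1 hwpos hwzero hwsum hfIcc hdrift hυIcc hυself hυrec hinit
  -- constants
  set Mφ : ℝ := ∑ a' : Fin N → Fin K, |φ a'| with hMφ
  set MU : ℝ := ∑ i, ∑ a' : Fin N → Fin K, |u i a'| with hMU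
  have hMφ0 : 0 ≤ Mφ := Finset.sum_nonneg fun _ _ => abs_nonneg _
  have hMU0 : 0 ≤ MU := Finset.sum_nonneg fun _ _ =>
    Finset.sum_nonneg fun _ _ => abs_nonneg _
  have hMui : ∀ i : Fin N, (∑ a' : Fin N → Fin K, |u i a'|) ≤ MU := fun i =>
    Finset.single_le_sum (f := fun i => ∑ a' : Fin N → Fin K, |u i a'|)
      (fun i' _ => Finset.sum_nonneg fun _ _ => abs_nonneg _) (Finset.mem_univ i)
  have hCpos : (0:ℝ) < 2*(N:ℝ)^2*MU*C₁ + 2*(N:ℝ)^2*Mφ + 1 := by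
    have h1 : (0:ℝ) ≤ 2*(N:ℝ)^2*MU*C₁ :=
      mul_nonneg (mul_nonneg (by positivity) hMU0) (le_of_lt hC₁pos)
    have h2 : (0:ℝ) ≤ 2*(N:ℝ)^2*Mφ := mul_nonneg (by positivity) hMφ0
    linarith
  refine ⟨2*(N:ℝ)^2*MU*C₁ + 2*(N:ℝ)^2*Mφ + 1, hCpos, 3, ?_⟩
  intro t ht hne
  have ht1 : 1 ≤ t := by omega
  have htpos : (0:ℝ) < t := by exact_mod_cast ht1
  have ht3 : (3:ℝ) ≤ t := by exact_mod_cast ht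
  -- extract a profitable deviation
  have h2 : ¬ ∀ i : Fin N, ∀ τ ∈ stdSimplex ℝ (Fin K),
      mixedExt (u i) (f t) ≥ mixedExt (u i) (Function.update (f t) i τ) - ε :=
    fun h => hne ⟨hfsimp t, h⟩
  push_neg at h2
  obtain ⟨iS, τS, hτS, hlt⟩ := h2
  -- constants for this t
  set c : ℝ := 1/((t:ℝ)+1) with hcdef
  have hc0 : 0 ≤ c := by positivity
  set err : ℝ := C₁ / t with herr
  have herr0 : 0 ≤ err := by positivity
  set E : ℝ := MU * ((N:ℝ) * err) with hE
  have hE0 : 0 ≤ E := by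
    rw [hE]; exact mul_nonneg hMU0 (mul_nonneg (Nat.cast_nonneg N) herr0)
  -- best-response property transferred to true empirical frequencies
  have br : ∀ i : Fin N, ∀ τ : Fin K → ℝ, τ ∈ stdSimplex ℝ (Fin K) →
      mixedExt (u i) (Function.update (f t) i τ)
        ≤ mixedExt (u i) (Function.update (f t) i (purePt (a (t+1) i))) + 2*E := by
    intro i τ hτ
    have hbrt := hbr (t+1) (by omega) i
    simp only [Nat.add_sub_cancel] at hbrt
    have lip : ∀ k : Fin K,
        |mixedExt (u i) (Function.update (fun j => υ t i j) i (purePt k))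
          - mixedExt (u i) (Function.update (f t) i (purePt k))| ≤ E := by
      intro k
      have h := mixedExt_lipschitz (u i)
        (Function.update (fun j => υ t i j) i (purePt k))
        (Function.update (f t) i (purePt k)) err
        (fun j k' => by
          by_cases hj : j = i
          · subst hj
            simp only [Function.update_self]
            exact ⟨purePt_nonneg _ _, purePt_le_one _ _⟩
          · rw [Function.update_of_ne hj]
            exact hυIcc t i j k')
        (fun j k' => by
          by_cases hj : j = i
          · subst hj
            simp only [Function.update_self]
            exact ⟨purePt_nonneg _ _, purePt_le_one _ _⟩
          · rw [Function.update_of_ne hj]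
            exact hfIcc t j k')
        herr0
        (fun j k' => by
          by_cases hj : j = i
          · subst hj
            simp only [Function.update_self]
            simpa using herr0
          · rw [Function.update_of_ne hj, Function.update_of_ne hj]
            exact hcons t ht1 i j k')
      refine le_trans h ?_
      rw [hE]
      exact mul_le_mul_of_nonneg_right (hMui i) (by positivity)
    have hpure : ∀ k : Fin K, mixedExt (u i) (Function.update (f t) i (purePt k))
        ≤ mixedExt (u i) (Function.update (f t) i (purePt (a (t+1) i))) + 2*E := by
      intro k
      have l1 := lip k
      have l2 := lip (a (t+1) i)
      have l3 := hbrt k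
      rw [abs_le] at l1 l2
      linarith [l1.1, l1.2, l2.1, l2.2]
    rw [mixedExt_update_eq_sum (u i) (f t) i τ]
    calc ∑ k, τ k * mixedExt (u i) (Function.update (f t) i (purePt k))
        ≤ ∑ k, τ k * (mixedExt (u i) (Function.update (f t) i (purePt (a (t+1) i))) + 2*E) :=
          Finset.sum_le_sum fun k _ => mul_le_mul_of_nonneg_left (hpure k) (hτ.1 k)
      _ = mixedExt (u i) (Function.update (f t) i (purePt (a (t+1) i))) + 2*E := by
          rw [← Finset.sum_mul, hτ.2, one_mul]
  -- per-player potential bound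
  have hcomb : ∀ i : Fin N,
      mixedExt φ (Function.update (f t) i (purePt (a (t+1) i))) - mixedExt φ (f t)
        ≥ (if i = iS then ε else 0) - 2*E - δ := by
    intro i
    have hpp := pot_vs_util (u := u) (uhat := uhat) (φ := φ) (δ := δ) hpot hnear
      (f t) (hfsimp t) i (a (t+1) i)
    by_cases hi : i = iS
    · subst hi
      have h1 := br i τS hτS
      rw [if_pos rfl]
      linarith
    · have h1 := br i (f t i) (hfsimp t i)
      rw [Function.update_eq_self] at h1
      rw [if_neg hi]
      linarith
  -- sum over players
  have hsum : ∑ i, (mixedExt φ (Function.update (f t) i (purePt (a (t+1) i))) - mixedExt φ (f t))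
      ≥ ε - (N:ℝ)*(2*E) - (N:ℝ)*δ := by
    have h1 : ∑ i : Fin N, ((if i = iS then ε else 0) - 2*E - δ)
        = ε - (N:ℝ)*(2*E) - (N:ℝ)*δ := by
      rw [Finset.sum_sub_distrib, Finset.sum_sub_distrib, Finset.sum_ite_eq' Finset.univ iS]
      simp [Finset.card_univ, mul_comm]
    rw [← h1]
    exact Finset.sum_le_sum fun i _ => hcomb i
  -- telescoping expansion
  set g : ℕ → Fin N → Fin K → ℝ :=
    fun m j => if (j:ℕ) < m then f (t+1) j else f t j with hgdef
  have hg0 : g 0 = f t := by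
    funext j k; simp [hgdef]
  have hgN : g N = f (t+1) := by
    funext j k; simp [hgdef, j.isLt]
  have hgIcc : ∀ m (j : Fin N) (k : Fin K), 0 ≤ g m j k ∧ g m j k ≤ 1 := by
    intro m j k
    simp only [hgdef]
    split
    · exact hfIcc (t+1) j k
    · exact hfIcc t j k
  have hgclose : ∀ m (j : Fin N) (k : Fin K), |g m j k - f t j k| ≤ c := by
    intro m j k
    simp only [hgdef]
    split
    · have := hdrift t j k
      rw [hcdef]
      exact this
    · simp [hc0]
  have htel : mixedExt φ (f (t+1)) - mixedExt φ (f t)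
      = ∑ m ∈ Finset.range N, (mixedExt φ (g (m+1)) - mixedExt φ (g m)) := by
    rw [Finset.sum_range_sub (fun m => mixedExt φ (g m)), hg0, hgN]
  have hstep : ∀ m, m < N →
      ∀ hm : m < N, mixedExt φ (g (m+1)) - mixedExt φ (g m)
        ≥ c * (mixedExt φ (Function.update (f t) ⟨m,hm⟩ (purePt (a (t+1) ⟨m,hm⟩)))
            - mixedExt φ (f t)) - c * (2 * (Mφ * ((N:ℝ) * c))) := by
    intro m _ hm
    set i : Fin N := ⟨m, hm⟩ with hidef
    have e1 : g (m+1) = Function.update (g m) i (f (t+1) i) := by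
      funext j k
      by_cases hj : j = i
      · subst hj
        rw [Function.update_self]
        have hval : ((i:ℕ)) = m := by rw [hidef]
        simp only [hgdef]
        rw [if_pos (by omega : (i:ℕ) < m + 1)]
      · rw [Function.update_of_ne hj]
        have hjm : (j:ℕ) ≠ m := fun h => hj (Fin.ext (by rw [h, hidef]))
        simp only [hgdef]
        by_cases h2 : (j:ℕ) < m
        · rw [if_pos h2, if_pos (by omega)]
        · rw [if_neg h2, if_neg (by omega)]
    have e2 : f (t+1) i = fun k => (1 - c) * f t i k + c * purePt (a (t+1) i) k := by
      funext k
      rw [hfrec (t+1) (by omega) i k]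
      simp only [Nat.add_sub_cancel]
      rw [hcdef]
      push_cast
      have h0 : ((t:ℝ) + 1) ≠ 0 := by positivity
      field_simp
    have e3 : Function.update (g m) i (f t i) = g m := by
      have h4 : g m i = f t i := by
        have hval : ((i:ℕ)) = m := by rw [hidef]
        simp only [hgdef]
        rw [if_neg (by omega : ¬ (i:ℕ) < m)]
      rw [← h4, Function.update_eq_self]
    have haff : mixedExt φ (g (m+1))
        = (1 - c) * mixedExt φ (Function.update (g m) i (f t i))
          + c * mixedExt φ (Function.update (g m) i (purePt (a (t+1) i))) := by
      rw [e1, e2]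
      exact mixedExt_update_affine φ (g m) i (f t i) (purePt (a (t+1) i)) c
    rw [haff, e3]
    -- Lipschitz transfer from g m to f t
    have lipA : |mixedExt φ (Function.update (g m) i (purePt (a (t+1) i)))
        - mixedExt φ (Function.update (f t) i (purePt (a (t+1) i)))| ≤ Mφ * ((N:ℝ) * c) := by
      apply mixedExt_lipschitz
      · intro j k
        by_cases hj : j = i
        · subst hj; simp only [Function.update_self]
          exact ⟨purePt_nonneg _ _, purePt_le_one _ _⟩
        · rw [Function.update_of_ne hj]; exact hgIcc m j k
      · intro j k
        by_cases hj : j = i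
        · subst hj; simp only [Function.update_self]
          exact ⟨purePt_nonneg _ _, purePt_le_one _ _⟩
        · rw [Function.update_of_ne hj]; exact hfIcc t j k
      · exact hc0
      · intro j k
        by_cases hj : j = i
        · subst hj; simp only [Function.update_self]
          simpa using hc0
        · rw [Function.update_of_ne hj, Function.update_of_ne hj]
          exact hgclose m j k
    have lipB : |mixedExt φ (g m) - mixedExt φ (f t)| ≤ Mφ * ((N:ℝ) * c) := by
      apply mixedExt_lipschitz
      · exact fun j k => hgIcc m j k
      · exact fun j k => hfIcc t j k
      · exact hc0
      · exact fun j k => hgclose m j k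
    rw [abs_le] at lipA lipB
    have expand : (1 - c) * mixedExt φ (g m)
        + c * mixedExt φ (Function.update (g m) i (purePt (a (t+1) i)))
        - mixedExt φ (g m)
        = c * (mixedExt φ (Function.update (g m) i (purePt (a (t+1) i)))
            - mixedExt φ (g m)) := by ring
    rw [expand]
    have hdiff : mixedExt φ (Function.update (g m) i (purePt (a (t+1) i)))
        - mixedExt φ (g m)
        ≥ mixedExt φ (Function.update (f t) i (purePt (a (t+1) i)))
          - mixedExt φ (f t) - 2 * (Mφ * ((N:ℝ) * c)) := by
      linarith [lipA.1, lipA.2, lipB.1, lipB.2]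
    have := mul_le_mul_of_nonneg_left hdiff hc0
    linarith [this]
  -- convert range sum to Fin sum
  set F : ℕ → ℝ := fun m =>
    if hm : m < N then
      mixedExt φ (Function.update (f t) ⟨m,hm⟩ (purePt (a (t+1) ⟨m,hm⟩)))
        - mixedExt φ (f t)
    else 0 with hFdef
  have hFsum : ∑ m ∈ Finset.range N, F m
      = ∑ i, (mixedExt φ (Function.update (f t) i (purePt (a (t+1) i))) - mixedExt φ (f t)) := by
    rw [← Fin.sum_univ_eq_sum_range F N]
    refine Finset.sum_congr rfl fun i _ => ?_
    simp only [hFdef]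
    rw [dif_pos i.isLt]
  have hexp : mixedExt φ (f (t+1)) - mixedExt φ (f t)
      ≥ c * (∑ i, (mixedExt φ (Function.update (f t) i (purePt (a (t+1) i)))
          - mixedExt φ (f t))) - (N:ℝ) * (c * (2 * (Mφ * ((N:ℝ) * c)))) := by
    rw [htel, ← hFsum]
    have h1 : ∑ m ∈ Finset.range N, (c * F m - c * (2 * (Mφ * ((N:ℝ) * c))))
        ≤ ∑ m ∈ Finset.range N, (mixedExt φ (g (m+1)) - mixedExt φ (g m)) := by
      refine Finset.sum_le_sum fun m hmr => ?_
      have hm : m < N := Finset.mem_range.1 hmr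
      have h2 := hstep m hm hm
      simp only [hFdef]
      rw [dif_pos hm]
      linarith
    have h3 : ∑ m ∈ Finset.range N, (c * F m - c * (2 * (Mφ * ((N:ℝ) * c))))
        = c * ∑ m ∈ Finset.range N, F m - (N:ℝ) * (c * (2 * (Mφ * ((N:ℝ) * c)))) := by
      rw [Finset.sum_sub_distrib, ← Finset.mul_sum, Finset.sum_const, Finset.card_range]
      push_cast
      ring
    linarith [h1, h3.symm.le]
  -- final numeric assembly
  have hlog1 : (1:ℝ) ≤ Real.log 3 := by
    have h3e : Real.exp 1 ≤ 3 := le_of_lt (lt_trans Real.exp_one_lt_d9 (by norm_num))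
    calc (1:ℝ) = Real.log (Real.exp 1) := (Real.log_exp 1).symm
      _ ≤ Real.log 3 := Real.log_le_log (Real.exp_pos 1) h3e
  have hlog : (1:ℝ) ≤ Real.log t :=
    le_trans hlog1 (Real.log_le_log (by norm_num) ht3)
  have hmulSum := mul_le_mul_of_nonneg_left hsum hc0
  have key1 : mixedExt φ (f (t+1)) - mixedExt φ (f t)
      ≥ c * (ε - (N:ℝ)*(2*E) - (N:ℝ)*δ) - (N:ℝ) * (c * (2 * (Mφ * ((N:ℝ) * c)))) := by
    linarith [hexp, hmulSum]
  have ec : c * (ε - (N:ℝ)*(2*E) - (N:ℝ)*δ)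
      = (ε - (N:ℝ)*δ) / ((t:ℝ)+1) - 2*(N:ℝ)*E * c := by
    rw [hcdef]; ring
  have hcle : c ≤ 1/(t:ℝ) := by
    rw [hcdef]
    apply one_div_le_one_div_of_le htpos
    linarith
  have hb1 : 2*(N:ℝ)*E*c ≤ 2*(N:ℝ)^2*MU*C₁ / (t:ℝ)^2 := by
    rw [hE, herr]
    have e1 : 2*(N:ℝ)*(MU * ((N:ℝ) * (C₁/(t:ℝ))))*c
        = (2*(N:ℝ)^2*MU*C₁) * ((1/(t:ℝ)) * c) := by ring
    have e2 : 2*(N:ℝ)^2*MU*C₁ / (t:ℝ)^2 = (2*(N:ℝ)^2*MU*C₁) * ((1/(t:ℝ)) * (1/(t:ℝ))) := by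
      ring
    rw [e1, e2]
    refine mul_le_mul_of_nonneg_left ?_
      (mul_nonneg (mul_nonneg (by positivity) hMU0) (le_of_lt hC₁pos))
    exact mul_le_mul_of_nonneg_left hcle (by positivity)
  have hb2 : (N:ℝ) * (c * (2 * (Mφ * ((N:ℝ) * c)))) ≤ 2*(N:ℝ)^2*Mφ / (t:ℝ)^2 := by
    have e1 : (N:ℝ) * (c * (2 * (Mφ * ((N:ℝ) * c)))) = (2*(N:ℝ)^2*Mφ) * (c * c) := by ring
    have e2 : 2*(N:ℝ)^2*Mφ / (t:ℝ)^2 = (2*(N:ℝ)^2*Mφ) * ((1/(t:ℝ)) * (1/(t:ℝ))) := by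
      ring
    rw [e1, e2]
    refine mul_le_mul_of_nonneg_left ?_ (mul_nonneg (by positivity) hMφ0)
    exact mul_le_mul hcle hcle hc0 (by positivity)
  have hb3 : 2*(N:ℝ)^2*MU*C₁ / (t:ℝ)^2 + 2*(N:ℝ)^2*Mφ / (t:ℝ)^2
      ≤ (2*(N:ℝ)^2*MU*C₁ + 2*(N:ℝ)^2*Mφ + 1) * Real.log t / (t:ℝ)^2 := by
    rw [← add_div, div_le_div_iff₀ (by positivity) (by positivity)]
    have h1 : (0:ℝ) ≤ 2*(N:ℝ)^2*MU*C₁ + 2*(N:ℝ)^2*Mφ := by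
      have h2 : (0:ℝ) ≤ 2*(N:ℝ)^2*MU*C₁ :=
        mul_nonneg (mul_nonneg (by positivity) hMU0) (le_of_lt hC₁pos)
      have h3 : (0:ℝ) ≤ 2*(N:ℝ)^2*Mφ := mul_nonneg (by positivity) hMφ0
      linarith
    have h4 : (2*(N:ℝ)^2*MU*C₁ + 2*(N:ℝ)^2*Mφ)
        ≤ (2*(N:ℝ)^2*MU*C₁ + 2*(N:ℝ)^2*Mφ + 1) * Real.log t := by
      have h5 := mul_le_mul_of_nonneg_left hlog
        (by linarith : (0:ℝ) ≤ 2*(N:ℝ)^2*MU*C₁ + 2*(N:ℝ)^2*Mφ + 1)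
      rw [mul_one] at h5
      linarith
    exact mul_le_mul_of_nonneg_right h4 (by positivity)
  linarith [key1, ec, hb1, hb2, hb3]
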